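/- Fix n ≥ 1 and let ν be a Borel probability measure on [0,∞) whose moment generating function satisfies ∫ e^{t x} dν(x) = 1 + t ∏_{k=1}^{n} (k−t)^{(−1)^k C(n,k)} for all t < 1. Then its mean is ∫ x dν(x) = exp( ∑_{i=1}^{n} C(n,i)(−1)^i log i ) = ∏_{k=1}^{n} k^{(−1)^k C(n,k)}, and its second moment is ∫ x² dν(x) = 2 · ( ∏_{k=1}^{n} k^{(−1)^k C(n,k)} ) · ∑_{i=1}^{n} C(n,i) (−1)^{i+1}/i, where ∑_{i=1}^{n} C(n,i)(−1)^{i+1}/i equals the harmonic number H_n = ∑_{k=1}^{n} 1/k. -/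

import Mathlib

open Finset MeasureTheory Real

section Aux
variable (n : ℕ)

noncomputable def Efn (k : ℕ) : ℤ := (-1)^k * (n.choose k : ℤ)
noncomputable def Qfn (t : ℝ) : ℝ := ∑ k ∈ Finset.Icc 1 n, ((Efn n k : ℝ)) * Real.log ((k:ℝ) - t)
noncomputable def Qd (t : ℝ) : ℝ := ∑ k ∈ Finset.Icc 1 n, ((Efn n k : ℝ)) * (-(((k:ℝ) - t)⁻¹))
noncomputable def Qdd (t : ℝ) : ℝ :=
  ∑ k ∈ Finset.Icc 1 n, ((Efn n k : ℝ)) * (-((((k:ℝ) - t)^2)⁻¹))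

lemma kpos {k : ℕ} (hk : k ∈ Finset.Icc 1 n) {t : ℝ} (ht : t < 1) : 0 < (k:ℝ) - t := by
  have h1 : (1:ℝ) ≤ (k:ℝ) := by exact_mod_cast (Finset.mem_Icc.mp hk).1
  linarith

lemma hPQ {t : ℝ} (ht : t < 1) :
    ∏ k ∈ Finset.Icc 1 n, ((k : ℝ) - t) ^ ((-1 : ℤ) ^ k * (n.choose k : ℤ))
      = Real.exp (Qfn n t) := by
  rw [Qfn, Real.exp_sum]
  apply Finset.prod_congr rfl
  intro k hk
  have hpos : 0 < (k:ℝ) - t := kpos n hk ht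
  rw [show ((-1 : ℤ) ^ k * (n.choose k : ℤ)) = Efn n k from rfl]
  rw [← Real.rpow_intCast ((k:ℝ) - t) (Efn n k), Real.rpow_def_of_pos hpos]
  ring_nf

lemma hQderiv {t : ℝ} (ht : t < 1) : HasDerivAt (Qfn n) (Qd n t) t := by
  apply HasDerivAt.fun_sum
  intro k hk
  have hpos : 0 < (k:ℝ) - t := kpos n hk ht
  have h1 : HasDerivAt (fun u : ℝ => (k:ℝ) - u) (-1) t := (hasDerivAt_id t).const_sub _
  have h2 : HasDerivAt (fun u : ℝ => Real.log ((k:ℝ) - u)) (((k:ℝ) - t)⁻¹ * (-1)) t :=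
    (Real.hasDerivAt_log hpos.ne').comp t h1
  have := h2.const_mul ((Efn n k : ℝ))
  refine this.congr_deriv ?_
  ring

lemma hQdderiv {t : ℝ} (ht : t < 1) : HasDerivAt (Qd n) (Qdd n t) t := by
  apply HasDerivAt.fun_sum
  intro k hk
  have hpos : 0 < (k:ℝ) - t := kpos n hk ht
  have h1 : HasDerivAt (fun u : ℝ => (k:ℝ) - u) (-1) t := (hasDerivAt_id t).const_sub _
  have h2 : HasDerivAt (fun u : ℝ => (((k:ℝ) - u)⁻¹)) (-(-1) / ((k:ℝ) - t)^2) t :=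
    h1.inv hpos.ne'
  have := (h2.neg).const_mul ((Efn n k : ℝ))
  refine this.congr_deriv ?_
  field_simp

noncomputable def Rfn (t : ℝ) : ℝ := 1 + t * Real.exp (Qfn n t)
noncomputable def Rd (t : ℝ) : ℝ := Real.exp (Qfn n t) * (1 + t * Qd n t)

lemma hRderiv {t : ℝ} (ht : t < 1) : HasDerivAt (Rfn n) (Rd n t) t := by
  have hexp : HasDerivAt (fun u => Real.exp (Qfn n u)) (Real.exp (Qfn n t) * Qd n t) t :=
    (Real.hasDerivAt_exp (Qfn n t)).comp t (hQderiv n ht)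
  have := ((hasDerivAt_id t).mul hexp).const_add (1:ℝ)
  refine this.congr_deriv ?_
  simp [Rd]
  ring

lemma hRdderiv : HasDerivAt (Rd n) (Real.exp (Qfn n 0) * (2 * Qd n 0)) 0 := by
  have hexp : HasDerivAt (fun u => Real.exp (Qfn n u)) (Real.exp (Qfn n 0) * Qd n 0) 0 :=
    (Real.hasDerivAt_exp (Qfn n 0)).comp 0 (hQderiv n (by norm_num))
  have hin : HasDerivAt (fun u => 1 + u * Qd n u) (1 * Qd n 0 + 0 * Qdd n 0) 0 :=
    ((hasDerivAt_id 0).mul (hQdderiv n (by norm_num))).const_add (1:ℝ)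
  have := hexp.mul hin
  refine this.congr_deriv ?_
  simp
  ring

end Aux

lemma keybound (x u : ℝ) (c : ℝ) (hc : 0 ≤ c) (hx : 0 ≤ x) (hu : u ≤ 1/2) :
    c * Real.exp (u*x) ≤ c * Real.exp (x/2) := by
  apply mul_le_mul_of_nonneg_left _ hc
  exact Real.exp_le_exp.mpr (by nlinarith)

lemma xle (x : ℝ) (hx : 0 ≤ x) : x ≤ 8 * Real.exp (x/8) := by
  nlinarith [Real.add_one_le_exp (x/8), Real.exp_pos (x/8)]

lemma bound1 (x u : ℝ) (hx : 0 ≤ x) (hu : u ≤ 1/2) :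
    x * Real.exp (u*x) ≤ 8 * Real.exp (3/4*x) := by
  have h2 : Real.exp (u*x) ≤ Real.exp (x/2) := Real.exp_le_exp.mpr (by nlinarith)
  calc x * Real.exp (u*x) ≤ (8 * Real.exp (x/8)) * Real.exp (x/2) :=
        mul_le_mul (xle x hx) h2 (Real.exp_pos _).le (by positivity)
    _ = 8 * Real.exp (x/8 + x/2) := by rw [Real.exp_add]; ring
    _ ≤ 8 * Real.exp (3/4*x) := by
        have := Real.exp_le_exp.mpr (show x/8+x/2 ≤ 3/4*x by linarith)
        linarith

lemma bound2 (x u : ℝ) (hx : 0 ≤ x) (hu : u ≤ 1/2) :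
    x^2 * Real.exp (u*x) ≤ 64 * Real.exp (3/4*x) := by
  have h2 : Real.exp (u*x) ≤ Real.exp (x/2) := Real.exp_le_exp.mpr (by nlinarith)
  have hsq : x^2 ≤ 64 * Real.exp (x/4) := by
    have := xle x hx
    have h8 : (8 * Real.exp (x/8))^2 = 64 * Real.exp (x/4) := by
      rw [mul_pow, sq (Real.exp (x/8)), ← Real.exp_add]
      norm_num
      ring_nf
    nlinarith [Real.exp_pos (x/8)]
  calc x^2 * Real.exp (u*x) ≤ (64 * Real.exp (x/4)) * Real.exp (x/2) :=
        mul_le_mul hsq h2 (Real.exp_pos _).le (by positivity)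
    _ = 64 * Real.exp (x/4 + x/2) := by rw [Real.exp_add]; ring
    _ ≤ 64 * Real.exp (3/4*x) := by
        have := Real.exp_le_exp.mpr (show x/4+x/2 ≤ 3/4*x by linarith)
        linarith
open Finset

lemma harm_range (m : ℕ) :
    ∑ j ∈ Finset.range m, ((m.choose (j+1) : ℝ)) * (-1:ℝ)^j / (j+1) =
    ∑ k ∈ Finset.range m, (1:ℝ) / (k+1) := by
  induction m with
  | zero => simp
  | succ m ih =>
    have hsplit : ∀ j ∈ Finset.range (m+1),
        (((m+1).choose (j+1) : ℝ)) * (-1:ℝ)^j / (j+1)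
          = ((m.choose j : ℝ)) * (-1:ℝ)^j / (j+1)
            + ((m.choose (j+1) : ℝ)) * (-1:ℝ)^j / (j+1) := by
      intro j _
      rw [Nat.choose_succ_succ]
      push_cast
      ring
    rw [Finset.sum_congr rfl hsplit, Finset.sum_add_distrib]
    have h2 : ∑ j ∈ Finset.range (m+1), ((m.choose (j+1) : ℝ)) * (-1:ℝ)^j / (j+1)
        = ∑ j ∈ Finset.range m, ((m.choose (j+1) : ℝ)) * (-1:ℝ)^j / (j+1) := by
      rw [Finset.sum_range_succ, Nat.choose_succ_self]
      simp
    have h1 : ∑ j ∈ Finset.range (m+1), ((m.choose j : ℝ)) * (-1:ℝ)^j / (j+1)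
        = 1 / (m+1) := by
      have key : ∀ j ∈ Finset.range (m+1),
          ((m.choose j : ℝ)) * (-1:ℝ)^j / (j+1)
            = (-(1:ℝ)/(m+1)) * (((-1:ℝ))^(j+1) * ((m+1).choose (j+1) : ℝ)) := by
        intro j _
        have hc : (m+1) * m.choose j = (m+1).choose (j+1) * (j+1) :=
          Nat.add_one_mul_choose_eq m j
        have hcc : ((m:ℝ)+1) * (m.choose j : ℝ) = ((m+1).choose (j+1) : ℝ) * ((j:ℝ)+1) := by
          exact_mod_cast congrArg (Nat.cast : ℕ → ℝ) hc
        have hj : ((j:ℝ)+1) ≠ 0 := by positivity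
        have hm : ((m:ℝ)+1) ≠ 0 := by positivity
        field_simp
        linear_combination ((-1:ℝ)^j) * hcc
      rw [Finset.sum_congr rfl key, ← Finset.mul_sum]
      have halt : ∑ j ∈ Finset.range (m+1+1), ((-1:ℝ))^j * (((m+1).choose j : ℕ) : ℝ) = 0 := by
        have := Int.alternating_sum_range_choose_of_ne (Nat.succ_ne_zero m)
        exact_mod_cast congrArg (Int.cast : ℤ → ℝ) this
      have hshift : ∑ j ∈ Finset.range (m+1), ((-1:ℝ))^(j+1) * (((m+1).choose (j+1)) : ℝ)
          = -1 := by
        have := Finset.sum_range_succ' (fun j => ((-1:ℝ))^j * (((m+1).choose j) : ℝ)) (m+1)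
        rw [this] at halt
        simp only [pow_zero, Nat.choose_zero_right, Nat.cast_one, one_mul] at halt
        linarith
      rw [hshift]
      ring
    rw [h1, h2, ih, Finset.sum_range_succ]
    push_cast
    ring

lemma harm_Icc (n : ℕ) :
    ∑ i ∈ Finset.Icc 1 n, (n.choose i : ℝ) * (-1 : ℝ) ^ (i + 1) / (i : ℝ)
        = ∑ k ∈ Finset.Icc 1 n, (1 : ℝ) / (k : ℝ) := by
  have e1 : Finset.Icc 1 n = Finset.Ico 1 (n+1) := rfl
  rw [e1, Finset.sum_Ico_eq_sum_range, Finset.sum_Ico_eq_sum_range]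
  simp only [Nat.add_sub_cancel]
  have := harm_range n
  calc ∑ j ∈ Finset.range n, ((n.choose (1+j) : ℝ)) * (-1:ℝ)^(1+j+1) / ((1+j : ℕ) : ℝ)
      = ∑ j ∈ Finset.range n, ((n.choose (j+1) : ℝ)) * (-1:ℝ)^j / (j+1) := by
        apply Finset.sum_congr rfl
        intro j _
        rw [add_comm 1 j]
        push_cast
        rw [pow_add, pow_add]
        ring
    _ = ∑ k ∈ Finset.range n, (1:ℝ) / (k+1) := harm_range n
    _ = ∑ j ∈ Finset.range n, (1:ℝ) / ((1+j : ℕ) : ℝ) := by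
        apply Finset.sum_congr rfl
        intro j _
        rw [add_comm 1 j]
        push_cast
        ring

theorem mean_and_second_moment_of_burnout_time
    (n : ℕ) (hn : 1 ≤ n)
    (ν : Measure ℝ) (hprob : IsProbabilityMeasure ν)
    (hsupp : ν (Set.Iio 0) = 0)
    (hmgf : ∀ t : ℝ, t < 1 →
      ∫ x, Real.exp (t * x) ∂ν =
        1 + t * ∏ k ∈ Finset.Icc 1 n, ((k : ℝ) - t) ^ ((-1 : ℤ) ^ k * (n.choose k : ℤ))) :
    (∫ x, x ∂ν
        = Real.exp (∑ i ∈ Finset.Icc 1 n, (n.choose i : ℝ) * (-1 : ℝ) ^ i * Real.log i))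
    ∧ (∫ x, x ∂ν = ∏ k ∈ Finset.Icc 1 n, (k : ℝ) ^ ((-1 : ℤ) ^ k * (n.choose k : ℤ)))
    ∧ (∫ x, x ^ 2 ∂ν
        = 2 * (∏ k ∈ Finset.Icc 1 n, (k : ℝ) ^ ((-1 : ℤ) ^ k * (n.choose k : ℤ)))
            * ∑ i ∈ Finset.Icc 1 n, (n.choose i : ℝ) * (-1 : ℝ) ^ (i + 1) / (i : ℝ))
    ∧ (∑ i ∈ Finset.Icc 1 n, (n.choose i : ℝ) * (-1 : ℝ) ^ (i + 1) / (i : ℝ)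
        = ∑ k ∈ Finset.Icc 1 n, (1 : ℝ) / (k : ℝ)) := by
  have hae : ∀ᵐ x ∂ν, 0 ≤ x := by
    rw [MeasureTheory.ae_iff]
    have h : {x : ℝ | ¬ 0 ≤ x} = Set.Iio 0 := by ext x; simp [not_le]
    rw [h]; exact hsupp
  have hInt34 : Integrable (fun x => Real.exp ((3/4) * x)) ν := by
    by_contra h
    have h0 : ∫ x, Real.exp ((3/4 : ℝ)*x) ∂ν = 0 := integral_undef h
    have hm := hmgf (3/4) (by norm_num)
    rw [h0] at hm
    have hprod : 0 < ∏ k ∈ Finset.Icc 1 n, ((k:ℝ) - 3/4) ^ ((-1:ℤ)^k * (n.choose k : ℤ)) :=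
      Finset.prod_pos fun k hk => zpow_pos (kpos n hk (by norm_num)) _
    nlinarith
  have hmeas : ∀ t : ℝ, AEStronglyMeasurable (fun x => Real.exp (t*x)) ν := fun t =>
    (Real.continuous_exp.comp (continuous_const.mul continuous_id)).aestronglyMeasurable
  have hIntExp : ∀ t : ℝ, t ≤ 3/4 → Integrable (fun x => Real.exp (t*x)) ν := by
    intro t ht
    apply hInt34.mono' (hmeas t)
    filter_upwards [hae] with x hx
    rw [Real.norm_eq_abs, abs_of_pos (Real.exp_pos _)]
    exact Real.exp_le_exp.mpr (by nlinarith)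
  have hD1 : ∀ t : ℝ, |t| < 1/4 →
      Integrable (fun x => x * Real.exp (t*x)) ν ∧
      HasDerivAt (fun u => ∫ x, Real.exp (u*x) ∂ν) (∫ x, x * Real.exp (t*x) ∂ν) t := by
    intro t ht
    obtain ⟨ht1, ht2⟩ := abs_lt.mp ht
    refine hasDerivAt_integral_of_dominated_loc_of_deriv_le (μ := ν)
      (F := fun (u : ℝ) (x : ℝ) => Real.exp (u*x))
      (F' := fun (u : ℝ) (x : ℝ) => x * Real.exp (u*x))
      (bound := fun x => 8 * Real.exp (3/4*x))
      (Metric.ball_mem_nhds _ (show (0:ℝ) < 1/4 by norm_num))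
      (Filter.Eventually.of_forall fun u => hmeas u)
      (hIntExp t (by linarith))
      ((continuous_id.mul (Real.continuous_exp.comp
        (continuous_const.mul continuous_id))).aestronglyMeasurable)
      ?_ ?_ ?_
    · filter_upwards [hae] with x hx u hu
      have hu2 : u ≤ 1/2 := by
        have := abs_lt.mp (by simpa [Real.dist_eq] using (Metric.mem_ball.mp hu))
        linarith [this.2]
      rw [norm_mul, Real.norm_eq_abs, Real.norm_eq_abs, abs_of_nonneg hx,
        abs_of_pos (Real.exp_pos _)]
      exact bound1 x u hx hu2
    · exact (hIntExp (3/4) le_rfl).const_mul 8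
    · apply Filter.Eventually.of_forall
      intro x u _
      have h1 : HasDerivAt (fun v : ℝ => v * x) x u := hasDerivAt_mul_const x
      have := (Real.hasDerivAt_exp (u*x)).comp u h1
      refine this.congr_deriv ?_
      ring
  have hD2 :
      Integrable (fun x => x^2 * Real.exp ((0:ℝ)*x)) ν ∧
      HasDerivAt (fun u => ∫ x, x * Real.exp (u*x) ∂ν)
        (∫ x, x^2 * Real.exp ((0:ℝ)*x) ∂ν) 0 := by
    refine hasDerivAt_integral_of_dominated_loc_of_deriv_le (μ := ν)
      (F := fun (u : ℝ) (x : ℝ) => x * Real.exp (u*x))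
      (F' := fun (u : ℝ) (x : ℝ) => x^2 * Real.exp (u*x))
      (bound := fun x => 64 * Real.exp (3/4*x))
      (Metric.ball_mem_nhds _ (show (0:ℝ) < 1/4 by norm_num))
      (Filter.Eventually.of_forall fun u =>
        (continuous_id.mul (Real.continuous_exp.comp
          (continuous_const.mul continuous_id))).aestronglyMeasurable)
      ((hD1 0 (by norm_num)).1)
      (((continuous_pow 2).mul (Real.continuous_exp.comp
        (continuous_const.mul continuous_id))).aestronglyMeasurable)
      ?_ ?_ ?_
    · filter_upwards [hae] with x hx u hu
      have hu2 : u ≤ 1/2 := by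
        have := abs_lt.mp (by simpa [Real.dist_eq] using (Metric.mem_ball.mp hu))
        linarith [this.2]
      rw [norm_mul, Real.norm_eq_abs, Real.norm_eq_abs, abs_of_nonneg (by positivity : (0:ℝ) ≤ x^2),
        abs_of_pos (Real.exp_pos _)]
      exact bound2 x u hx hu2
    · exact (hIntExp (3/4) le_rfl).const_mul 64
    · apply Filter.Eventually.of_forall
      intro x u _
      have h1 : HasDerivAt (fun v : ℝ => v * x) x u := hasDerivAt_mul_const x
      have h2 := ((Real.hasDerivAt_exp (u*x)).comp u h1).const_mul x
      refine h2.congr_deriv ?_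
      ring
  -- identification with R
  have hgR : Set.EqOn (fun u => ∫ x, Real.exp (u*x) ∂ν) (Rfn n) (Set.Iio 1) := by
    intro t ht
    simp only [Set.mem_Iio] at ht
    simp only [Rfn]
    rw [hmgf t ht, hPQ n ht]
  have hRat : ∀ t : ℝ, t < 1 →
      HasDerivAt (fun u => ∫ x, Real.exp (u*x) ∂ν) (Rd n t) t := by
    intro t ht
    exact (hRderiv n ht).congr_of_eventuallyEq
      (Filter.eventuallyEq_of_mem (isOpen_Iio.mem_nhds ht) hgR)
  have hM1R : ∀ t : ℝ, |t| < 1/4 → (∫ x, x * Real.exp (t*x) ∂ν) = Rd n t := by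
    intro t ht
    exact (hD1 t ht).2.unique (hRat t (by linarith [(abs_lt.mp ht).2]))
  have hM1Req : (fun t => ∫ x, x * Real.exp (t*x) ∂ν) =ᶠ[nhds (0:ℝ)] Rd n := by
    have hball : Metric.ball (0:ℝ) (1/4) ∈ nhds (0:ℝ) := Metric.ball_mem_nhds _ (by norm_num)
    apply Filter.eventuallyEq_of_mem hball
    intro t ht
    exact hM1R t (by simpa [Real.dist_eq] using (Metric.mem_ball.mp ht))
  have hsec : (∫ x, x^2 * Real.exp ((0:ℝ)*x) ∂ν) = Real.exp (Qfn n 0) * (2 * Qd n 0) :=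
    hD2.2.unique ((hRdderiv n).congr_of_eventuallyEq hM1Req)
  have hmean : (∫ x, x * Real.exp ((0:ℝ)*x) ∂ν) = Real.exp (Qfn n 0) := by
    rw [hM1R 0 (by norm_num)]
    simp [Rd]
  simp only [zero_mul, Real.exp_zero, mul_one] at hmean hsec
  have hprod0 : ∏ k ∈ Finset.Icc 1 n, (k : ℝ) ^ ((-1 : ℤ) ^ k * (n.choose k : ℤ))
      = Real.exp (Qfn n 0) := by
    rw [← hPQ n (show (0:ℝ) < 1 by norm_num)]
    apply Finset.prod_congr rfl
    intro k _
    norm_num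
  refine ⟨?_, ?_, ?_, harm_Icc n⟩
  · rw [hmean]
    congr 1
    simp only [Qfn]
    apply Finset.sum_congr rfl
    intro i _
    simp only [Efn, sub_zero]
    push_cast
    ring
  · rw [hmean, hprod0]
  · rw [hsec, hprod0]
    have hQd0 : Qd n 0 = ∑ i ∈ Finset.Icc 1 n, (n.choose i : ℝ) * (-1 : ℝ) ^ (i + 1) / (i : ℝ) := by
      simp only [Qd]
      apply Finset.sum_congr rfl
      intro i _
      simp only [Efn, sub_zero]
      push_cast
      ring
    rw [hQd0]
    ring
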